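/- The 7×7 matrix over the polynomial ring ℤ[λ₁, λ₂] with rows (120λ₁λ₂, −60λ₂, 0, 1, 0, 0, 0), (0, 60λ₁λ₂, −36λ₂, 0, 1, 0, 0), (0, 0, 24λ₁λ₂, −18λ₂, 0, 1, 0), (0, 0, 0, 6λ₁λ₂, −6λ₂, 0, 1), (120(λ₁² − λ₂), −60λ₁, 12, 0, 0, 0, 0), (0, 60(λ₁² − λ₂), −36λ₁, 9, 0, 0, 0), (0, 0, 12(λ₁² − λ₂), −9λ₁, 3, 0, 0) has determinant 86400(λ₁² − 4λ₂)³; in particular this matrix is nonsingular. -/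

import Mathlib

open MvPolynomial

set_option maxHeartbeats 1600000
set_option maxRecDepth 4000

/-- The 7×7 matrix over ℤ[λ₁, λ₂] (with λ₁ = X 0, λ₂ = X 1) expressing the classes
s₁₀, s₁₁, s₁₂, s₁₃, s₀₀, s₀₁, s₀₂′ in the basis s₆⁰, …, s₆⁶ has determinant
86400(λ₁² − 4λ₂)³; in particular it is nonsingular. -/
theorem stmt7 (M : Matrix (Fin 7) (Fin 7) (MvPolynomial (Fin 2) ℤ))
    (hM : M = !![120 * X 0 * X 1, -(60 * X 1), 0, 1, 0, 0, 0;
      0, 60 * X 0 * X 1, -(36 * X 1), 0, 1, 0, 0;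
      0, 0, 24 * X 0 * X 1, -(18 * X 1), 0, 1, 0;
      0, 0, 0, 6 * X 0 * X 1, -(6 * X 1), 0, 1;
      120 * ((X 0) ^ 2 - X 1), -(60 * X 0), 12, 0, 0, 0, 0;
      0, 60 * ((X 0) ^ 2 - X 1), -(36 * X 0), 9, 0, 0, 0;
      0, 0, 12 * ((X 0) ^ 2 - X 1), -(9 * X 0), 3, 0, 0]) :
    M.det = 86400 * ((X 0) ^ 2 - 4 * X 1) ^ 3 ∧ M.det ≠ 0 := by
  set N : Matrix (Fin 6) (Fin 6) (MvPolynomial (Fin 2) ℤ) :=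
      !![120 * X 0 * X 1, -(60 * X 1), 0, 1, 0, 0;
      0, 60 * X 0 * X 1, -(36 * X 1), 0, 1, 0;
      0, 0, 24 * X 0 * X 1, -(18 * X 1), 0, 1;
      120 * ((X 0) ^ 2 - X 1), -(60 * X 0), 12, 0, 0, 0;
      0, 60 * ((X 0) ^ 2 - X 1), -(36 * X 0), 9, 0, 0;
      0, 0, 12 * ((X 0) ^ 2 - X 1), -(9 * X 0), 3, 0] with hN
  set P : Matrix (Fin 5) (Fin 5) (MvPolynomial (Fin 2) ℤ) :=
      !![120 * X 0 * X 1, -(60 * X 1), 0, 1, 0;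
      0, 60 * X 0 * X 1, -(36 * X 1), 0, 1;
      120 * ((X 0) ^ 2 - X 1), -(60 * X 0), 12, 0, 0;
      0, 60 * ((X 0) ^ 2 - X 1), -(36 * X 0), 9, 0;
      0, 0, 12 * ((X 0) ^ 2 - X 1), -(9 * X 0), 3] with hP
  have step1 : M.det = -N.det := by
    have e0 : M 0 6 = 0 := by rw [hM]; rfl
    have e1 : M 1 6 = 0 := by rw [hM]; rfl
    have e2 : M 2 6 = 0 := by rw [hM]; rfl
    have e3 : M 3 6 = 1 := by rw [hM]; rfl
    have e4 : M 4 6 = 0 := by rw [hM]; rfl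
    have e5 : M 5 6 = 0 := by rw [hM]; rfl
    have e6 : M 6 6 = 0 := by rw [hM]; rfl
    have hsub : M.submatrix (Fin.succAbove 3) (Fin.succAbove 6) = N := by
      rw [hM, hN]; ext i j; fin_cases i <;> fin_cases j <;> rfl
    rw [Matrix.det_succ_column M 6, Fin.sum_univ_seven, e0, e1, e2, e3, e4, e5, e6, hsub]
    norm_num [show ((3:Fin 7):ℕ) = 3 from rfl, show ((6:Fin 7):ℕ) = 6 from rfl]
  have step2 : N.det = -P.det := by
    have e0 : N 0 5 = 0 := by rw [hN]; rfl
    have e1 : N 1 5 = 0 := by rw [hN]; rfl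
    have e2 : N 2 5 = 1 := by rw [hN]; rfl
    have e3 : N 3 5 = 0 := by rw [hN]; rfl
    have e4 : N 4 5 = 0 := by rw [hN]; rfl
    have e5 : N 5 5 = 0 := by rw [hN]; rfl
    have hsub : N.submatrix (Fin.succAbove 2) (Fin.succAbove 5) = P := by
      rw [hN, hP]; ext i j; fin_cases i <;> fin_cases j <;> rfl
    rw [Matrix.det_succ_column N 5, Fin.sum_univ_six, e0, e1, e2, e3, e4, e5, hsub]
    norm_num [show ((2:Fin 6):ℕ) = 2 from rfl, show ((5:Fin 6):ℕ) = 5 from rfl]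
  have step3 : P.det = 86400 * ((X 0) ^ 2 - 4 * X 1) ^ 3 := by
    rw [hP]
    simp [Matrix.det_succ_row_zero, Fin.sum_univ_succ, Fin.succAbove,
      Matrix.cons_val_succ, Fin.castSucc, Fin.castAdd, Fin.castLE]
    ring
  have hdet : M.det = 86400 * ((X 0) ^ 2 - 4 * X 1) ^ 3 := by
    rw [step1, step2, neg_neg, step3]
  refine ⟨hdet, ?_⟩
  rw [hdet]
  intro h
  have := congrArg (eval (fun i : Fin 2 => if i = 0 then (0 : ℤ) else 1)) h
  simp at this
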